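/- Let f : X × Y → ℝ be differentiable, L-smooth jointly, μ_y-strongly convex in y for each fixed x, where Y ⊆ ℝ^q is convex and compact. Define φ(x) = argmin_{y ∈ Y} f(x, y). Then φ is (L/μ_y)-Lipschitz: for all x₁, x₂ ∈ X, ‖φ(x₁) − φ(x₂)‖ ≤ (L/μ_y)‖x₁ − x₂‖. -/

import Mathlib

/-- Let `f(x,y)` be differentiable with `y`-gradient `gy`, jointly
`L`-Lipschitz gradients, and `μ`-strongly convex in `y` on the convex compact set `Y`.
If `φ x` is the minimizer of `f(x, ·)` over `Y`, then `φ` is `(L/μ)`-Lipschitz. -/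
theorem stmt12 {p q : ℕ}
    (X : Set (EuclideanSpace ℝ (Fin p))) (Y : Set (EuclideanSpace ℝ (Fin q)))
    (hY : Convex ℝ Y) (hYcomp : IsCompact Y)
    (f : EuclideanSpace ℝ (Fin p) → EuclideanSpace ℝ (Fin q) → ℝ)
    (gy : EuclideanSpace ℝ (Fin p) → EuclideanSpace ℝ (Fin q) → EuclideanSpace ℝ (Fin q))
    (L μ : ℝ) (hL : 0 < L) (hμ : 0 < μ)
    (hsmooth : ∀ x₁ x₂ : EuclideanSpace ℝ (Fin p), ∀ y₁ y₂ : EuclideanSpace ℝ (Fin q),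
      ‖gy x₁ y₁ - gy x₂ y₂‖ ≤ L * (‖x₁ - x₂‖ + ‖y₁ - y₂‖))
    (hconv : ∀ x : EuclideanSpace ℝ (Fin p), ∀ y₁ ∈ Y, ∀ y₂ ∈ Y,
      f x y₂ ≥ f x y₁ + inner ℝ (gy x y₁) (y₂ - y₁) + μ / 2 * ‖y₂ - y₁‖ ^ 2)
    (φ : EuclideanSpace ℝ (Fin p) → EuclideanSpace ℝ (Fin q))
    (hφY : ∀ x, φ x ∈ Y)
    (hφmin : ∀ x, ∀ y ∈ Y, (0 : ℝ) ≤ inner ℝ (gy x (φ x)) (y - φ x)) :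
    ∀ x₁ ∈ X, ∀ x₂ ∈ X, ‖φ x₁ - φ x₂‖ ≤ (L / μ) * ‖x₁ - x₂‖ := by
  intro x₁ _ x₂ _
  set u := φ x₁ with hu
  set v := φ x₂ with hv
  rcases eq_or_ne u v with h | h
  · rw [h, sub_self, norm_zero]
    positivity
  have hnorm : 0 < ‖v - u‖ := by
    rw [norm_pos_iff, sub_ne_zero]
    exact fun hc => h hc.symm
  -- strong monotonicity from hconv
  have h1 := hconv x₁ u (hφY x₁) v (hφY x₂)
  have h2 := hconv x₁ v (hφY x₂) u (hφY x₁)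
  have hmono : μ * ‖v - u‖ ^ 2 ≤ inner ℝ (gy x₁ v - gy x₁ u) (v - u) := by
    have hs : ‖u - v‖ = ‖v - u‖ := norm_sub_rev _ _
    have hinner : (inner ℝ (gy x₁ v) (u - v) : ℝ) = - inner ℝ (gy x₁ v) (v - u) := by
      rw [← inner_neg_right]; congr 1; abel
    rw [hs, hinner] at h2
    rw [inner_sub_left]
    linarith
  -- variational inequalities
  have hvi1 : (0:ℝ) ≤ inner ℝ (gy x₁ u) (v - u) := hφmin x₁ v (hφY x₂)
  have hvi2 : (0:ℝ) ≤ inner ℝ (gy x₂ v) (u - v) := hφmin x₂ u (hφY x₁)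
  have hvi2' : (inner ℝ (gy x₂ v) (v - u) : ℝ) ≤ 0 := by
    have : (inner ℝ (gy x₂ v) (u - v) : ℝ) = - inner ℝ (gy x₂ v) (v - u) := by
      rw [← inner_neg_right]; congr 1; abel
    linarith [hvi2, this ▸ hvi2]
  have key : μ * ‖v - u‖ ^ 2 ≤ inner ℝ (gy x₁ v - gy x₂ v) (v - u) := by
    have : (inner ℝ (gy x₁ v - gy x₂ v) (v - u) : ℝ)
        = inner ℝ (gy x₁ v - gy x₁ u) (v - u) + inner ℝ (gy x₁ u) (v - u)
          - inner ℝ (gy x₂ v) (v - u) := by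
      rw [inner_sub_left, inner_sub_left]; ring
    rw [this]
    linarith
  have hcs : (inner ℝ (gy x₁ v - gy x₂ v) (v - u) : ℝ) ≤ ‖gy x₁ v - gy x₂ v‖ * ‖v - u‖ :=
    real_inner_le_norm _ _
  have hlip : ‖gy x₁ v - gy x₂ v‖ ≤ L * ‖x₁ - x₂‖ := by
    have := hsmooth x₁ x₂ v v
    simpa using this
  have : μ * ‖v - u‖ ^ 2 ≤ L * ‖x₁ - x₂‖ * ‖v - u‖ := by
    calc μ * ‖v - u‖ ^ 2 ≤ ‖gy x₁ v - gy x₂ v‖ * ‖v - u‖ := le_trans key hcs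
    _ ≤ L * ‖x₁ - x₂‖ * ‖v - u‖ := by
        apply mul_le_mul_of_nonneg_right hlip (norm_nonneg _)
  have hfin : μ * ‖v - u‖ ≤ L * ‖x₁ - x₂‖ := by
    nlinarith
  have : ‖u - v‖ = ‖v - u‖ := norm_sub_rev _ _
  rw [this, div_mul_eq_mul_div, le_div_iff₀ hμ]
  nlinarith
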